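/- arXiv:math/0411392 — 2 statements merged into one kernel-verified Lean document; each statement's English description precedes it below -/
import Mathlib

section
/- Suppose the Verblunsky coefficients satisfy |α_n| ≤ C q^n for all n ≥ 0, where C > 0 and q ∈ (0,1). Set C_1 = ∏_{j=0}^∞ (1 + C q^j) (a finite product). Then for every n ≥ 0: if |z| ≤ 1 then |Φ_n*(z)| ≤ C_1, and if |z| ≥ 1 then |Φ_n(z)| ≤ C_1 |z|^n. -/
/-!
Reversing the Szegő recursion gives `Φ*_{n+1} = Φ*_n - α_n z Φ_n`, so one step multiplies
`max ‖Φ_n z‖ ‖Φ*_n z‖` by at most `(1 + ‖α_n‖) * max 1 ‖z‖`. Hence both are bounded by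
`∏_{j<n} (1 + ‖α_j‖) * max 1 ‖z‖ ^ n`, and these partial products stay below `C₁` because every
factor satisfies `1 ≤ 1 + ‖α_j‖ ≤ 1 + C q^j`.
-/

open Polynomial Filter Topology

/-- The monic orthogonal polynomials on the unit circle, defined by the Szegő
recursion `Φ₀ = 1`, `Φ_{n+1}(z) = z Φ_n(z) - conj(α_n) Φ_n^*(z)`, where the reversed
polynomial is `P^*(z) = Σ_{j=0}^n conj(c_{n-j}) z^j`. -/
noncomputable def PhiP (α : ℕ → ℂ) : ℕ → Polynomial ℂ
  | 0 => 1
  | n + 1 => X * PhiP α n -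
      Polynomial.C ((starRingEnd ℂ) (α n)) *
        Polynomial.reflect n (Polynomial.map (starRingEnd ℂ) (PhiP α n))

/-- The reversed polynomial `Φ_n^*(z) = z^n conj(Φ_n(1/conj z))`. -/
noncomputable def PhiStarP (α : ℕ → ℂ) (n : ℕ) : Polynomial ℂ :=
  Polynomial.reflect n (Polynomial.map (starRingEnd ℂ) (PhiP α n))

theorem Polynomial.reflect_succ_X_mul {R : Type*} [Semiring R] {f : R[X]} {n : ℕ}
    (hf : f.natDegree ≤ n) : reflect (n + 1) (X * f) = reflect n f := by
  rw [add_comm, reflect_mul X f natDegree_X_le hf, reflect_one_X, one_mul]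

theorem Polynomial.reflect_succ_reflect {R : Type*} [Semiring R] {f : R[X]} {n : ℕ}
    (hf : f.natDegree ≤ n) : reflect (n + 1) (reflect n f) = X * f := by
  rw [← reflect_succ_X_mul hf, reflect_reflect]

theorem Polynomial.map_conj_map_conj (f : ℂ[X]) :
    (f.map (starRingEnd ℂ)).map (starRingEnd ℂ) = f := by
  ext; simp

theorem prod_le_of_hasProd_of_one_le {ι R : Type*} [CommSemiring R] [PartialOrder R]
    [IsOrderedRing R] [TopologicalSpace R] [ClosedIciTopology R] {f : ι → R} {a : R}
    (hf : HasProd f a) (h1 : ∀ i, 1 ≤ f i) (s : Finset ι) : ∏ i ∈ s, f i ≤ a :=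
  ge_of_tendsto hf (eventually_atTop.2 ⟨s, fun _ hst => Finset.prod_mono_set_of_one_le h1 hst⟩)

section Szego

variable (α : ℕ → ℂ)

theorem natDegree_PhiP_le (n : ℕ) : (PhiP α n).natDegree ≤ n := by
  induction n with
  | zero => simp [PhiP]
  | succ n ih =>
    have hX : (X * PhiP α n).natDegree ≤ n + 1 :=
      natDegree_mul_le.trans (by rw [natDegree_X]; omega)
    have hstar : (C (starRingEnd ℂ (α n)) * reflect n ((PhiP α n).map (starRingEnd ℂ))).natDegree
        ≤ n + 1 :=
      natDegree_C_mul_le _ _ |>.trans <| natDegree_reflect_le.trans <|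
        max_le (by omega) (natDegree_map_le.trans (by omega))
    exact (natDegree_sub_le _ _).trans (max_le hX hstar)

theorem PhiStarP_zero : PhiStarP α 0 = 1 := by
  simp [PhiStarP, PhiP, reflect_one]

theorem PhiStarP_succ (n : ℕ) :
    PhiStarP α (n + 1) = PhiStarP α n - C (α n) * (X * PhiP α n) := by
  have hdeg := natDegree_PhiP_le α n
  rw [PhiStarP, PhiP, Polynomial.map_sub, Polynomial.map_mul, Polynomial.map_mul, map_C,
    Complex.conj_conj, Polynomial.map_X, ← reflect_map, map_conj_map_conj, reflect_sub,
    reflect_C_mul, reflect_succ_reflect hdeg, reflect_succ_X_mul (natDegree_map_le.trans hdeg),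
    PhiStarP]

theorem eval_PhiP_succ (n : ℕ) (z : ℂ) :
    (PhiP α (n + 1)).eval z =
      z * (PhiP α n).eval z - starRingEnd ℂ (α n) * (PhiStarP α n).eval z := by
  simp [PhiP, PhiStarP]

theorem eval_PhiStarP_succ (n : ℕ) (z : ℂ) :
    (PhiStarP α (n + 1)).eval z = (PhiStarP α n).eval z - α n * (z * (PhiP α n).eval z) := by
  simp [PhiStarP_succ]

theorem norm_eval_PhiP_le_and_norm_eval_PhiStarP_le (n : ℕ) (z : ℂ) :
    ‖(PhiP α n).eval z‖ ≤ (∏ j ∈ Finset.range n, (1 + ‖α j‖)) * max 1 ‖z‖ ^ n ∧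
      ‖(PhiStarP α n).eval z‖ ≤ (∏ j ∈ Finset.range n, (1 + ‖α j‖)) * max 1 ‖z‖ ^ n := by
  induction n with
  | zero => simp [PhiP, PhiStarP_zero]
  | succ n ih =>
    obtain ⟨hP, hS⟩ := ih
    set M := (∏ j ∈ Finset.range n, (1 + ‖α j‖)) * max 1 ‖z‖ ^ n
    set r := max 1 ‖z‖
    have hr : 1 ≤ r := le_max_left _ _
    have hzr : ‖z‖ ≤ r := le_max_right _ _
    have hM : 0 ≤ M := (norm_nonneg _).trans hP
    have hMr : M ≤ r * M := le_mul_of_one_le_left hM hr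
    have hbound :
        (∏ j ∈ Finset.range (n + 1), (1 + ‖α j‖)) * r ^ (n + 1) = r * M + ‖α n‖ * (r * M) := by
      rw [Finset.prod_range_succ, pow_succ]; ring
    rw [hbound]
    constructor
    · calc ‖(PhiP α (n + 1)).eval z‖
          ≤ ‖z‖ * ‖(PhiP α n).eval z‖ + ‖α n‖ * ‖(PhiStarP α n).eval z‖ := by
            rw [eval_PhiP_succ]
            refine (norm_sub_le _ _).trans_eq ?_
            simp
        _ ≤ r * M + ‖α n‖ * (r * M) := by gcongr; exact hS.trans hMr
    · calc ‖(PhiStarP α (n + 1)).eval z‖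
          ≤ ‖(PhiStarP α n).eval z‖ + ‖α n‖ * (‖z‖ * ‖(PhiP α n).eval z‖) := by
            rw [eval_PhiStarP_succ]
            refine (norm_sub_le _ _).trans_eq ?_
            simp
        _ ≤ r * M + ‖α n‖ * (r * M) := by gcongr; exact hS.trans hMr

end Szego

theorem stmt_0_general (α : ℕ → ℂ)
    (C q : ℝ)
    (hdecay : ∀ n : ℕ, ‖α n‖ ≤ C * q ^ n)
    (C₁ : ℝ) (hC₁ : HasProd (fun j : ℕ => 1 + C * q ^ j) C₁) :
    ∀ n : ℕ, ∀ z : ℂ,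
      (‖z‖ ≤ 1 → ‖(PhiStarP α n).eval z‖ ≤ C₁) ∧
      (1 ≤ ‖z‖ → ‖(PhiP α n).eval z‖ ≤ C₁ * ‖z‖ ^ n) := by
  have hprod (n : ℕ) : ∏ j ∈ Finset.range n, (1 + ‖α j‖) ≤ C₁ := by
    have hfactor (j : ℕ) : 1 ≤ 1 + C * q ^ j := by linarith [norm_nonneg (α j), hdecay j]
    refine le_trans ?_ (prod_le_of_hasProd_of_one_le hC₁ hfactor (Finset.range n))
    gcongr with j
    exact hdecay j
  intro n z
  obtain ⟨hP, hS⟩ := norm_eval_PhiP_le_and_norm_eval_PhiStarP_le α n z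
  constructor
  · intro hz
    rw [max_eq_left hz, one_pow, mul_one] at hS
    exact hS.trans (hprod n)
  · intro hz
    rw [max_eq_right hz] at hP
    exact hP.trans (by gcongr; exact hprod n)

theorem stmt_0 (α : ℕ → ℂ) (hα : ∀ n, ‖α n‖ < 1)
    (C q : ℝ) (hC : 0 < C) (hq0 : 0 < q) (hq1 : q < 1)
    (hdecay : ∀ n : ℕ, ‖α n‖ ≤ C * q ^ n)
    (C₁ : ℝ) (hC₁ : HasProd (fun j : ℕ => 1 + C * q ^ j) C₁) :
    ∀ n : ℕ, ∀ z : ℂ,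
      (‖z‖ ≤ 1 → ‖(PhiStarP α n).eval z‖ ≤ C₁) ∧
      (1 ≤ ‖z‖ → ‖(PhiP α n).eval z‖ ≤ C₁ * ‖z‖ ^ n) :=
  stmt_0_general α C q hdecay C₁ hC₁
end

section
/- Let m ≥ 1, let x_1, …, x_m ∈ ℂ and z ∈ ℂ, and let Δ_m(z) be the determinant of the m × m tridiagonal matrix whose diagonal entries are z + x_1, z + x_2, …, z + x_m, whose superdiagonal entries are z x_2, z x_3, …, z x_m (the entry in row i, column i+1 being z x_{i+1}), whose subdiagonal entries are all 1, and whose remaining entries are 0. Then Δ_m(z) = z^m + x_1 z^{m−1} + x_1 x_2 z^{m−2} + ⋯ + x_1 x_2 ⋯ x_m, i.e., Δ_m(z) = Σ_{k=0}^{m} (∏_{i=1}^{k} x_i) z^{m−k}. -/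
open Matrix

/-- Tridiagonal matrix with shift `s`. -/
noncomputable def triT (x : ℕ → ℂ) (z : ℂ) (m s : ℕ) : Matrix (Fin m) (Fin m) ℂ :=
  Matrix.of fun i j =>
    if (i : ℕ) = (j : ℕ) then z + x (s + (i : ℕ) + 1)
    else if (j : ℕ) = (i : ℕ) + 1 then z * x (s + (j : ℕ) + 1)
    else if (i : ℕ) = (j : ℕ) + 1 then 1
    else 0

noncomputable def triS (x : ℕ → ℂ) (z : ℂ) (m s : ℕ) : ℂ :=
  ∑ k ∈ Finset.range (m + 1), (∏ i ∈ Finset.range k, x (s + 1 + i)) * z ^ (m - k)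

lemma triS_rec (x : ℕ → ℂ) (z : ℂ) (m s : ℕ) :
    triS x z (m + 2) s
      = (z + x (s + 1)) * triS x z (m + 1) (s + 1) - z * x (s + 2) * triS x z m (s + 2) := by
  have hQ : ∀ k, ∏ i ∈ Finset.range (k + 1), x (s + 1 + i)
      = x (s + 1) * ∏ i ∈ Finset.range k, x (s + 1 + 1 + i) := by
    intro k
    rw [Finset.prod_range_succ' (fun i => x (s + 1 + i)), mul_comm]
    congr 1
    exact Finset.prod_congr rfl fun i _ => by congr 1; omega
  have hR : ∀ k, ∏ i ∈ Finset.range (k + 1), x (s + 1 + 1 + i)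
      = x (s + 2) * ∏ i ∈ Finset.range k, x (s + 2 + 1 + i) := by
    intro k
    rw [Finset.prod_range_succ' (fun i => x (s + 1 + 1 + i)), mul_comm]
    congr 1
    exact Finset.prod_congr rfl fun i _ => by congr 1; omega
  have hsplit : (z + x (s + 1)) * triS x z (m + 1) (s + 1)
      - z * x (s + 2) * triS x z m (s + 2)
      = x (s + 1) * triS x z (m + 1) (s + 1)
        + (z * triS x z (m + 1) (s + 1) - z * x (s + 2) * triS x z m (s + 2)) := by ring
  have h2 : z * triS x z (m + 1) (s + 1) - z * x (s + 2) * triS x z m (s + 2)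
      = z ^ (m + 2) := by
    unfold triS
    rw [Finset.mul_sum, Finset.mul_sum]
    rw [Finset.sum_range_succ'
      (fun k => z * ((∏ i ∈ Finset.range k, x (s + 1 + 1 + i)) * z ^ (m + 1 - k)))]
    have h1 : ∀ k ∈ Finset.range (m + 1),
        z * ((∏ i ∈ Finset.range (k + 1), x (s + 1 + 1 + i)) * z ^ (m + 1 - (k + 1)))
        = z * x (s + 2) * ((∏ i ∈ Finset.range k, x (s + 2 + 1 + i)) * z ^ (m - k)) := by
      intro k hk
      rw [hR k]
      have : m + 1 - (k + 1) = m - k := by omega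
      rw [this]; ring
    rw [Finset.sum_congr rfl h1]
    simp only [Finset.prod_range_zero, one_mul, Nat.sub_zero]
    ring
  have h3 : x (s + 1) * triS x z (m + 1) (s + 1)
      = ∑ k ∈ Finset.range (m + 2),
          (∏ i ∈ Finset.range (k + 1), x (s + 1 + i)) * z ^ (m + 1 - k) := by
    unfold triS
    rw [Finset.mul_sum]
    exact Finset.sum_congr rfl fun k _ => by rw [hQ k]; ring
  rw [hsplit, h2, h3]
  unfold triS
  rw [Finset.sum_range_succ' (fun k => (∏ i ∈ Finset.range k, x (s + 1 + i)) * z ^ (m + 2 - k))]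
  simp only [Finset.prod_range_zero, one_mul, Nat.sub_zero]
  congr 1
  refine Finset.sum_congr rfl fun k hk => ?_
  have : m + 2 - (k + 1) = m + 1 - k := by omega
  rw [this]

lemma triT_minor1 (x : ℕ → ℂ) (z : ℂ) (m s : ℕ) :
    (triT x z (m + 2) s).submatrix Fin.succ Fin.succ = triT x z (m + 1) (s + 1) := by
  ext i j
  simp only [triT, submatrix_apply, of_apply, Fin.val_succ]
  split_ifs <;> first | rfl | omega | contradiction | (congr 2 <;> omega)

lemma triT_minor2 (x : ℕ → ℂ) (z : ℂ) (m s : ℕ) :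
    ((triT x z (m + 2) s).submatrix Fin.succ ((1 : Fin (m + 2)).succAbove)).submatrix
        Fin.succ Fin.succ
      = triT x z m (s + 2) := by
  ext i j
  have hv : (((1 : Fin (m + 2)).succAbove j.succ : Fin (m + 2)) : ℕ) = (j : ℕ) + 2 := by
    have := Fin.succ_succAbove_succ (0 : Fin (m + 1)) j
    rw [show ((0 : Fin (m + 1)).succ) = (1 : Fin (m + 2)) by rfl] at this
    rw [this]
    simp
  simp only [triT, submatrix_apply, of_apply, Fin.val_succ, hv]
  split_ifs <;> first | rfl | omega | contradiction | (congr 2 <;> omega)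

lemma triT_det (x : ℕ → ℂ) (z : ℂ) : ∀ m s, (triT x z m s).det = triS x z m s := by
  intro m
  induction m using Nat.twoStepInduction with
  | zero =>
    intro s
    simp [triS, Matrix.det_fin_zero]
  | one =>
    intro s
    rw [Matrix.det_fin_one]
    simp [triS, triT, Finset.sum_range_succ]
  | more m ih1 ih2 =>
    intro s
    rw [Matrix.det_succ_row_zero, Fin.sum_univ_succ, Fin.sum_univ_succ]
    have h0 : ∀ j : Fin m, triT x z (m + 2) s 0 j.succ.succ = 0 := by
      intro j
      simp only [triT, of_apply, Fin.val_succ, Fin.val_zero]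
      split_ifs <;> first | rfl | omega | contradiction
    have e00 : triT x z (m + 2) s 0 0 = z + x (s + 1) := by
      simp [triT]
    have e01 : triT x z (m + 2) s 0 (0 : Fin (m+1)).succ = z * x (s + 2) := by
      simp only [triT, of_apply, Fin.succ_zero_eq_one, Fin.val_one, Fin.val_zero]
      norm_num
    rw [e00, e01]
    simp only [h0, mul_zero, zero_mul, Finset.sum_const_zero, add_zero,
      Fin.val_zero, pow_zero, one_mul, Fin.val_succ, Fin.succ_zero_eq_one,
      Fin.val_one, pow_one, Fin.succAbove_zero]
    rw [triT_minor1, ih2]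
    -- second minor
    have d2 : ((triT x z (m + 2) s).submatrix Fin.succ ((1 : Fin (m + 2)).succAbove)).det
        = triS x z m (s + 2) := by
      set N := (triT x z (m + 2) s).submatrix Fin.succ ((1 : Fin (m + 2)).succAbove) with hN
      have hv0 : (((1 : Fin (m + 2)).succAbove 0 : Fin (m + 2)) : ℕ) = 0 := by
        simp [Fin.succAbove]
      rw [Matrix.det_succ_column_zero, Fin.sum_univ_succ]
      have e0 : N 0 0 = 1 := by
        simp only [hN, submatrix_apply, triT, of_apply, Fin.val_succ, Fin.val_zero, hv0]
        norm_num
      -- tail sum over Fin (m+1): rows i.succ; split further? rows i.succ for i : Fin (m+1)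
      have hz' : ∀ i : Fin m, N i.succ 0 = 0 := by
        intro i
        simp only [hN, submatrix_apply, triT, of_apply, Fin.val_succ, hv0]
        split_ifs <;> first | rfl | omega | contradiction
      simp only [hz', mul_zero, zero_mul, Finset.sum_const_zero, add_zero, e0,
        Fin.val_zero, pow_zero, one_mul, mul_one, Fin.succAbove_zero]
      rw [triT_minor2, ih1]
    rw [d2, triS_rec]
    ring

lemma prod_Icc_one (x : ℕ → ℂ) : ∀ k, ∏ i ∈ Finset.Icc 1 k, x i
    = ∏ i ∈ Finset.range k, x (0 + 1 + i) := by
  intro k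
  induction k with
  | zero => simp
  | succ k ih =>
    rw [Finset.prod_Icc_succ_top (by omega), ih, Finset.prod_range_succ]
    congr 2
    omega

theorem stmt_19 (m : ℕ) (hm : 1 ≤ m) (x : ℕ → ℂ) (z : ℂ)
    (M : Matrix (Fin m) (Fin m) ℂ)
    (hM : ∀ i j : Fin m, M i j =
      if (i : ℕ) = (j : ℕ) then z + x ((i : ℕ) + 1)
      else if (j : ℕ) = (i : ℕ) + 1 then z * x ((j : ℕ) + 1)
      else if (i : ℕ) = (j : ℕ) + 1 then 1
      else 0) :
    M.det = ∑ k ∈ Finset.range (m + 1),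
      (∏ i ∈ Finset.Icc 1 k, x i) * z ^ (m - k) := by
  have hMT : M = triT x z m 0 := by
    ext i j
    rw [hM i j]
    simp only [triT, of_apply, Nat.zero_add]
  rw [hMT, triT_det]
  unfold triS
  refine Finset.sum_congr rfl fun k hk => ?_
  rw [prod_Icc_one]
end
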